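/- Let D : J ⥤ C and E : K ⥤ C be small diagrams with naturally isomorphic image presheaves. Then D and E are connected by a zigzag in the category of small categories over C in which every underlying functor between index categories is a final functor. Concretely, there exists a small category S with final functors u : J ⥤ S and v : K ⥤ S and a functor G : S ⥤ C such that G ∘ u = D and G ∘ v = E. -/

import Mathlib

open CategoryTheory CategoryTheory.Limits

universe v u

namespace Stmt7Aux

variable {C : Type u} [Category.{v} C]

/-- Small induced category on a family of costructured arrows. -/
def SmallInd {X : Type v} {P : Cᵒᵖ ⥤ Type v} (_f : X → CostructuredArrow yoneda P) : Type v := X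

instance smallIndCat {X : Type v} {P : Cᵒᵖ ⥤ Type v} (f : X → CostructuredArrow yoneda P) :
    SmallCategory (SmallInd f) where
  Hom a b := {g : (f a).left ⟶ (f b).left // yoneda.map g ≫ (f b).hom = (f a).hom}
  id a := ⟨𝟙 _, by simp⟩
  comp g h := ⟨g.1 ≫ h.1, by rw [Functor.map_comp, Category.assoc, h.2, g.2]⟩

/-- The inclusion of the small induced category. -/
def smallIndIncl {X : Type v} {P : Cᵒᵖ ⥤ Type v} (f : X → CostructuredArrow yoneda P) :
    SmallInd f ⥤ CostructuredArrow yoneda P where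
  obj a := f a
  map g := CostructuredArrow.homMk g.1 g.2
  map_id a := by ext; rfl
  map_comp g h := by ext; rfl

instance {X : Type v} {P : Cᵒᵖ ⥤ Type v} (f : X → CostructuredArrow yoneda P) :
    (smallIndIncl f).Faithful where
  map_injective h := Subtype.ext (congrArg CommaMorphism.left h)

instance {X : Type v} {P : Cᵒᵖ ⥤ Type v} (f : X → CostructuredArrow yoneda P) :
    (smallIndIncl f).Full where
  map_surjective m := ⟨⟨m.left, CostructuredArrow.w m⟩, by ext; rfl⟩

end Stmt7Aux

open Stmt7Aux

/-- If two small diagrams `D : J ⥤ C` and `E : K ⥤ C` have naturally isomorphic image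
presheaves, then they are connected by a zigzag of final functors over `C`: there is a small
category `S`, final functors `u : J ⥤ S` and `v : K ⥤ S`, and a functor `G : S ⥤ C` with
`u ⋙ G = D` and `v ⋙ G = E`. -/
theorem stmt7 {J : Type v} [SmallCategory J] {K : Type v} [SmallCategory K]
    {C : Type u} [Category.{v} C] (D : J ⥤ C) (E : K ⥤ C)
    (h : Nonempty (colimit (D ⋙ yoneda) ≅ colimit (E ⋙ yoneda))) :
    ∃ (S : Type v) (_ : SmallCategory S) (u : J ⥤ S) (v : K ⥤ S) (G : S ⥤ C),
      u.Final ∧ v.Final ∧ u ⋙ G = D ∧ v ⋙ G = E := by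
  obtain ⟨φ⟩ := h
  let P : Cᵒᵖ ⥤ Type v := colimit (D ⋙ yoneda)
  let cD : Cocone (D ⋙ yoneda) := colimit.cocone (D ⋙ yoneda)
  let cE : Cocone (E ⋙ yoneda) := (colimit.cocone (E ⋙ yoneda)).extend φ.inv
  let uBig : J ⥤ CostructuredArrow yoneda P :=
    cD.toCostructuredArrow ⋙ CostructuredArrow.pre D yoneda P
  let vBig : K ⥤ CostructuredArrow yoneda P :=
    cE.toCostructuredArrow ⋙ CostructuredArrow.pre E yoneda P
  have hu : uBig.Final :=
    Presheaf.final_toCostructuredArrow_comp_pre D (colimit.isColimit _)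
  have hv : vBig.Final :=
    Presheaf.final_toCostructuredArrow_comp_pre E
      (IsColimit.extendIso φ.inv (colimit.isColimit _))
  let f : J ⊕ K → CostructuredArrow yoneda P := Sum.elim uBig.obj vBig.obj
  let ι := smallIndIncl f
  let u : J ⥤ SmallInd f :=
    { obj := Sum.inl
      map := fun g => ⟨(uBig.map g).left, CostructuredArrow.w _⟩
      map_id := fun j => Subtype.ext
        (by show (uBig.map (𝟙 j)).left = _; rw [uBig.map_id]; rfl)
      map_comp := fun g g' => Subtype.ext
        (by show (uBig.map (g ≫ g')).left = (uBig.map g).left ≫ (uBig.map g').left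
            rw [uBig.map_comp]; rfl) }
  let v : K ⥤ SmallInd f :=
    { obj := Sum.inr
      map := fun g => ⟨(vBig.map g).left, CostructuredArrow.w _⟩
      map_id := fun k => Subtype.ext
        (by show (vBig.map (𝟙 k)).left = _; rw [vBig.map_id]; rfl)
      map_comp := fun g g' => Subtype.ext
        (by show (vBig.map (g ≫ g')).left = (vBig.map g).left ≫ (vBig.map g').left
            rw [vBig.map_comp]; rfl) }
  have huι : u ⋙ ι = uBig := by
    refine CategoryTheory.Functor.ext (fun j => rfl) (fun j j' g => ?_)
    ext
    simp [ι, u, smallIndIncl]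
    exact ((Category.id_comp _).trans (Category.comp_id _)).symm
  have hvι : v ⋙ ι = vBig := by
    refine CategoryTheory.Functor.ext (fun k => rfl) (fun k k' g => ?_)
    ext
    simp [ι, v, smallIndIncl]
    exact ((Category.id_comp _).trans (Category.comp_id _)).symm
  have hufin : u.Final := by
    have : (u ⋙ ι).Final := huι ▸ hu
    exact Functor.final_of_comp_full_faithful u ι
  have hvfin : v.Final := by
    have : (v ⋙ ι).Final := hvι ▸ hv
    exact Functor.final_of_comp_full_faithful v ι
  exact ⟨SmallInd f, inferInstance, u, v, ι ⋙ CostructuredArrow.proj yoneda P,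
    hufin, hvfin, rfl, rfl⟩
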